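/- Assume λ̃_r > λ̃_{r+1} and λ̃_r > 0. Let Ψ ∈ ℝ^{r×r} be orthogonal and let X = O^B (Λ^B)^{-1/2} O^Ã_{:,{1,…,r}} Ψ. Then the Hessian of ℓ at X is positive semidefinite: q_X(V) ≥ 0 for every V ∈ ℝ^{d×r}. -/

import Mathlib

open Matrix

private lemma gev_quartic_d2 (c0 c1 c2 c3 c4 : ℝ) :
    iteratedDeriv 2 (fun t : ℝ => c0 + c1*t + c2*t^2 + c3*t^3 + c4*t^4) 0 = 2*c2 := by
  have hd : ∀ t : ℝ, HasDerivAt (fun t : ℝ => c0 + c1*t + c2*t^2 + c3*t^3 + c4*t^4)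
      (c1 + 2*c2*t + 3*c3*t^2 + 4*c4*t^3) t := by
    intro t
    have h0 := hasDerivAt_const t c0
    have h1 := (hasDerivAt_id t).const_mul c1
    have h2 := (hasDerivAt_pow 2 t).const_mul c2
    have h3 := (hasDerivAt_pow 3 t).const_mul c3
    have h4 := (hasDerivAt_pow 4 t).const_mul c4
    have := (((h0.add h1).add h2).add h3).add h4
    refine this.congr_deriv ?_
    push_cast
    ring
  have hd2 : ∀ t : ℝ, HasDerivAt (fun t : ℝ => c1 + 2*c2*t + 3*c3*t^2 + 4*c4*t^3)
      (2*c2 + 6*c3*t + 12*c4*t^2) t := by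
    intro t
    have h0 := hasDerivAt_const t c1
    have h1 := (hasDerivAt_id t).const_mul (2*c2)
    have h2 := (hasDerivAt_pow 2 t).const_mul (3*c3)
    have h3 := (hasDerivAt_pow 3 t).const_mul (4*c4)
    have := ((h0.add h1).add h2).add h3
    refine this.congr_deriv ?_
    push_cast
    ring
  have hde : deriv (fun t : ℝ => c0 + c1*t + c2*t^2 + c3*t^3 + c4*t^4)
      = fun t => c1 + 2*c2*t + 3*c3*t^2 + 4*c4*t^3 := funext fun t => (hd t).deriv
  rw [iteratedDeriv_succ, iteratedDeriv_one, hde]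
  simpa using (hd2 0).deriv

/-- `ℓ(X) = L(X, XᵀAX) = -2 tr(XᵀAX) + tr((XᵀAX)(XᵀBX))`. -/
noncomputable def gevEll (d r : ℕ) (A B : Matrix (Fin d) (Fin d) ℝ)
    (X : Matrix (Fin d) (Fin r) ℝ) : ℝ :=
  -2 * (Xᵀ * A * X).trace + ((Xᵀ * A * X) * (Xᵀ * B * X)).trace

/-- `q_X(V)`: the quadratic form of the Hessian `H_X` of `ℓ` at `X`, i.e. the second
derivative at `t = 0` of `t ↦ ℓ(X + tV)`. -/
noncomputable def gevHessQuad (d r : ℕ) (A B : Matrix (Fin d) (Fin d) ℝ)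
    (X V : Matrix (Fin d) (Fin r) ℝ) : ℝ :=
  iteratedDeriv 2 (fun t : ℝ => gevEll d r A B (X + t • V)) 0

private lemma gevHessQuad_eq (d r : ℕ) (A B : Matrix (Fin d) (Fin d) ℝ)
    (X V : Matrix (Fin d) (Fin r) ℝ) :
    gevHessQuad d r A B X V
      = 2 * (-2*(Vᵀ*A*V).trace + ((Xᵀ*A*X)*(Vᵀ*B*V)).trace
          + ((Xᵀ*A*V + Vᵀ*A*X)*(Xᵀ*B*V + Vᵀ*B*X)).trace + ((Vᵀ*A*V)*(Xᵀ*B*X)).trace) := by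
  have hS : ∀ t : ℝ, (X + t•V)ᵀ*A*(X + t•V)
      = Xᵀ*A*X + t•(Xᵀ*A*V + Vᵀ*A*X) + (t^2)•(Vᵀ*A*V) := by
    intro t
    simp only [transpose_add, transpose_smul, Matrix.add_mul, Matrix.mul_add,
      Matrix.smul_mul, Matrix.mul_smul, smul_smul, smul_add]
    module
  have hT : ∀ t : ℝ, (X + t•V)ᵀ*B*(X + t•V)
      = Xᵀ*B*X + t•(Xᵀ*B*V + Vᵀ*B*X) + (t^2)•(Vᵀ*B*V) := by
    intro t
    simp only [transpose_add, transpose_smul, Matrix.add_mul, Matrix.mul_add,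
      Matrix.smul_mul, Matrix.mul_smul, smul_smul, smul_add]
    module
  have hfun : (fun t : ℝ => gevEll d r A B (X + t•V)) = fun t =>
      (-2*(Xᵀ*A*X).trace + ((Xᵀ*A*X)*(Xᵀ*B*X)).trace)
      + (-2*((Xᵀ*A*V + Vᵀ*A*X).trace) + ((Xᵀ*A*X)*(Xᵀ*B*V + Vᵀ*B*X)).trace
          + ((Xᵀ*A*V + Vᵀ*A*X)*(Xᵀ*B*X)).trace)*t
      + (-2*(Vᵀ*A*V).trace + ((Xᵀ*A*X)*(Vᵀ*B*V)).trace
          + ((Xᵀ*A*V + Vᵀ*A*X)*(Xᵀ*B*V + Vᵀ*B*X)).trace + ((Vᵀ*A*V)*(Xᵀ*B*X)).trace)*t^2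
      + (((Xᵀ*A*V + Vᵀ*A*X)*(Vᵀ*B*V)).trace + ((Vᵀ*A*V)*(Xᵀ*B*V + Vᵀ*B*X)).trace)*t^3
      + (((Vᵀ*A*V)*(Vᵀ*B*V)).trace)*t^4 := by
    funext t
    simp only [gevEll]
    rw [hS t, hT t]
    simp only [Matrix.add_mul, Matrix.mul_add, Matrix.smul_mul, Matrix.mul_smul, smul_smul,
      trace_add, trace_smul, smul_eq_mul]
    ring
  simp only [gevHessQuad]
  rw [hfun, gev_quartic_d2]

private lemma gev_key_nonneg (d r : ℕ) (hr : 1 ≤ r) (hrlt : r < d) (lam : Fin d → ℝ)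
    (hlam : ∀ k l : Fin d, k ≤ l → lam l ≤ lam k)
    (hgap : lam ⟨r, hrlt⟩ < lam ⟨r - 1, Nat.lt_of_le_of_lt (Nat.sub_le r 1) hrlt⟩)
    (hpos : 0 < lam ⟨r - 1, Nat.lt_of_le_of_lt (Nat.sub_le r 1) hrlt⟩)
    (W : Matrix (Fin d) (Fin r) ℝ) :
    0 ≤ -2*(Wᵀ*(diagonal lam)*W).trace
      + ((((1 : Matrix (Fin d) (Fin d) ℝ).submatrix id (Fin.castLE hrlt.le))ᵀ*(diagonal lam)
          *((1 : Matrix (Fin d) (Fin d) ℝ).submatrix id (Fin.castLE hrlt.le)))*(Wᵀ*W)).trace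
      + ((((1 : Matrix (Fin d) (Fin d) ℝ).submatrix id (Fin.castLE hrlt.le))ᵀ*(diagonal lam)*W
          + Wᵀ*(diagonal lam)*((1 : Matrix (Fin d) (Fin d) ℝ).submatrix id (Fin.castLE hrlt.le)))
         *(((1 : Matrix (Fin d) (Fin d) ℝ).submatrix id (Fin.castLE hrlt.le))ᵀ*W
          + Wᵀ*((1 : Matrix (Fin d) (Fin d) ℝ).submatrix id (Fin.castLE hrlt.le)))).trace
      + (Wᵀ*(diagonal lam)*W).trace := by
  set c : Fin r → Fin d := Fin.castLE hrlt.le with hc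
  have tA : (Wᵀ*(diagonal lam)*W).trace = ∑ j, ∑ i, lam i * W i j ^ 2 := by
    rw [Matrix.mul_assoc]
    simp [Matrix.trace, Matrix.diag, Matrix.mul_apply, Matrix.diagonal_apply, ite_mul, zero_mul]
    refine Finset.sum_congr rfl fun j _ => Finset.sum_congr rfl fun i _ => by ring
  have tB : ((((1 : Matrix (Fin d) (Fin d) ℝ).submatrix id c)ᵀ*(diagonal lam)
      *((1 : Matrix (Fin d) (Fin d) ℝ).submatrix id c))*(Wᵀ*W)).trace
      = ∑ j, ∑ i, lam (c j) * W i j ^ 2 := by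
    simp [Matrix.trace, Matrix.diag, Matrix.mul_apply, Matrix.diagonal_apply, Matrix.one_apply,
      ite_mul, mul_ite, zero_mul, mul_zero, Finset.mul_sum, hc, Fin.castLE_inj]
    refine Finset.sum_congr rfl fun j _ => Finset.sum_congr rfl fun i _ => by ring
  have tC : ((((1 : Matrix (Fin d) (Fin d) ℝ).submatrix id c)ᵀ*(diagonal lam)*W
          + Wᵀ*(diagonal lam)*((1 : Matrix (Fin d) (Fin d) ℝ).submatrix id c))
         *(((1 : Matrix (Fin d) (Fin d) ℝ).submatrix id c)ᵀ*W
          + Wᵀ*((1 : Matrix (Fin d) (Fin d) ℝ).submatrix id c))).trace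
      = ∑ j, ∑ k, (lam (c j) * W (c j) k + lam (c k) * W (c k) j)
          * (W (c k) j + W (c j) k) := by
    have hM : ∀ j k, (((1 : Matrix (Fin d) (Fin d) ℝ).submatrix id c)ᵀ*(diagonal lam)*W
        + Wᵀ*(diagonal lam)*((1 : Matrix (Fin d) (Fin d) ℝ).submatrix id c)) j k
        = lam (c j) * W (c j) k + W (c k) j * lam (c k) := by
      intro j k
      simp [Matrix.mul_apply, Matrix.add_apply, Matrix.diagonal_apply, Matrix.one_apply,
        ite_mul, mul_ite, zero_mul, mul_zero]
    have hN : ∀ j k, (((1 : Matrix (Fin d) (Fin d) ℝ).submatrix id c)ᵀ*W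
        + Wᵀ*((1 : Matrix (Fin d) (Fin d) ℝ).submatrix id c)) j k
        = W (c j) k + W (c k) j := by
      intro j k
      simp [Matrix.mul_apply, Matrix.add_apply, Matrix.one_apply, ite_mul, mul_ite, zero_mul,
        mul_zero]
    simp only [Matrix.trace, Matrix.diag, Matrix.mul_apply, hM, hN]
    refine Finset.sum_congr rfl fun j _ => Finset.sum_congr rfl fun k _ => by ring
  rw [tA, tB, tC]
  have hcpos : ∀ j : Fin r, lam ⟨r - 1, by omega⟩ ≤ lam (c j) := by
    intro j
    exact hlam _ _ (by simp [hc, Fin.le_def, Fin.castLE]; omega)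
  set Stop : ℝ := ∑ j, ∑ k, (lam (c j) - lam (c k)) * W (c k) j ^ 2 with hStop
  set Cv : ℝ := ∑ j, ∑ k, (lam (c j) * W (c j) k + lam (c k) * W (c k) j)
      * (W (c k) j + W (c j) k) with hCv
  have hsym : 0 ≤ Stop + Cv := by
    have hcomb : Stop + Cv = ∑ j, ∑ k, ((lam (c j) - lam (c k)) * W (c k) j ^ 2
        + (lam (c j) * W (c j) k + lam (c k) * W (c k) j) * (W (c k) j + W (c j) k)) := by
      rw [hStop, hCv, ← Finset.sum_add_distrib]
      exact Finset.sum_congr rfl fun j _ => (Finset.sum_add_distrib).symm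
    have hswap : (∑ j, ∑ k, ((lam (c j) - lam (c k)) * W (c k) j ^ 2
        + (lam (c j) * W (c j) k + lam (c k) * W (c k) j) * (W (c k) j + W (c j) k)))
        = ∑ j, ∑ k, ((lam (c k) - lam (c j)) * W (c j) k ^ 2
        + (lam (c k) * W (c k) j + lam (c j) * W (c j) k) * (W (c j) k + W (c k) j)) :=
      Finset.sum_comm
    have h2 : 2 * (Stop + Cv) = ∑ j, ∑ k, (lam (c j) + lam (c k))
        * (W (c j) k + W (c k) j) ^ 2 := by
      rw [two_mul, hcomb]
      nth_rewrite 2 [hswap]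
      rw [← Finset.sum_add_distrib]
      refine Finset.sum_congr rfl fun j _ => ?_
      rw [← Finset.sum_add_distrib]
      refine Finset.sum_congr rfl fun k _ => by ring
    have hRHS : 0 ≤ ∑ j, ∑ k, (lam (c j) + lam (c k)) * (W (c j) k + W (c k) j) ^ 2 := by
      refine Finset.sum_nonneg fun j _ => Finset.sum_nonneg fun k _ => ?_
      refine mul_nonneg ?_ (sq_nonneg _)
      have := hcpos j
      have := hcpos k
      linarith
    linarith
  have hmono : Stop ≤ ∑ j, ∑ i, (lam (c j) - lam i) * W i j ^ 2 := by
    refine Finset.sum_le_sum fun j _ => ?_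
    have hinj : Function.Injective c := Fin.castLE_injective _
    have : (∑ k, (lam (c j) - lam (c k)) * W (c k) j ^ 2)
        = ∑ i ∈ Finset.univ.map ⟨c, hinj⟩, (lam (c j) - lam i) * W i j ^ 2 := by
      rw [Finset.sum_map]; rfl
    rw [this]
    refine Finset.sum_le_sum_of_subset_of_nonneg (Finset.subset_univ _) ?_
    intro i _ hi
    have hir : r ≤ (i : ℕ) := by
      by_contra hlt
      push_neg at hlt
      exact hi (Finset.mem_map.mpr ⟨⟨(i:ℕ), hlt⟩, Finset.mem_univ _, by
        simp [hc, Fin.castLE]⟩)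
    have h1 : lam i ≤ lam ⟨r, hrlt⟩ := hlam _ _ (by simp [Fin.le_def]; omega)
    have h2 : lam ⟨r - 1, by omega⟩ ≤ lam (c j) := hcpos j
    have : 0 ≤ lam (c j) - lam i := by nlinarith
    exact mul_nonneg this (sq_nonneg _)
  have hsplit : (∑ j, ∑ i, (lam (c j) - lam i) * W i j ^ 2)
      = (∑ j, ∑ i, lam (c j) * W i j ^ 2) - (∑ j, ∑ i, lam i * W i j ^ 2) := by
    rw [← Finset.sum_sub_distrib]
    refine Finset.sum_congr rfl fun j _ => ?_
    rw [← Finset.sum_sub_distrib]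
    exact Finset.sum_congr rfl fun i _ => by ring
  linarith

/-- Assume `λ̃_r > λ̃_{r+1}` and `λ̃_r > 0`.  For orthogonal `Ψ` and
`X = O^B (Λ^B)^{-1/2} O^Ã_{:,{1,…,r}} Ψ`, the Hessian of `ℓ` at `X` is positive
semidefinite: `q_X(V) ≥ 0` for every `V`. -/
theorem gev_stable_equilibrium_hessian_psd
    (d r : ℕ) (hd : 1 ≤ d) (hr : 1 ≤ r) (hrlt : r < d)
    (A B : Matrix (Fin d) (Fin d) ℝ) (hA : Aᵀ = A) (hB : B.PosDef)
    (OB : Matrix (Fin d) (Fin d) ℝ) (hOB : OBᵀ * OB = 1)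
    (μ : Fin d → ℝ) (hμ : ∀ k, 0 < μ k)
    (hBdec : B = OB * diagonal μ * OBᵀ)
    (OA : Matrix (Fin d) (Fin d) ℝ) (hOA : OAᵀ * OA = 1)
    (lam : Fin d → ℝ) (hlam : ∀ k l : Fin d, k ≤ l → lam l ≤ lam k)
    (hgap : lam ⟨r, hrlt⟩ < lam ⟨r - 1, by omega⟩)
    (hpos : 0 < lam ⟨r - 1, by omega⟩)
    (hAdec : diagonal (fun k => (Real.sqrt (μ k))⁻¹) * OBᵀ * A * OB *
        diagonal (fun k => (Real.sqrt (μ k))⁻¹) = OA * diagonal lam * OAᵀ)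
    (Ψ : Matrix (Fin r) (Fin r) ℝ) (hΨ : Ψᵀ * Ψ = 1)
    (X : Matrix (Fin d) (Fin r) ℝ)
    (hX : X = OB * diagonal (fun k => (Real.sqrt (μ k))⁻¹) *
        OA.submatrix id (Fin.castLE hrlt.le) * Ψ) :
    ∀ V : Matrix (Fin d) (Fin r) ℝ, 0 ≤ gevHessQuad d r A B X V := by
  intro V
  set Dm : Matrix (Fin d) (Fin d) ℝ := diagonal (fun k => (Real.sqrt (μ k))⁻¹) with hDm
  set Sm : Matrix (Fin d) (Fin d) ℝ := diagonal (fun k => Real.sqrt (μ k)) with hSm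
  set E : Matrix (Fin d) (Fin r) ℝ :=
    (1 : Matrix (Fin d) (Fin d) ℝ).submatrix id (Fin.castLE hrlt.le) with hE
  set W : Matrix (Fin d) (Fin r) ℝ := OAᵀ * Sm * OBᵀ * V * Ψᵀ with hW
  have hsq : ∀ k, Real.sqrt (μ k) ≠ 0 := fun k => ne_of_gt (Real.sqrt_pos.mpr (hμ k))
  have hDmSm : Dm * Sm = 1 := by
    rw [hDm, hSm, diagonal_mul_diagonal]
    have : (fun k => (Real.sqrt (μ k))⁻¹ * Real.sqrt (μ k)) = fun _ => (1:ℝ) :=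
      funext fun k => inv_mul_cancel₀ (hsq k)
    rw [this, diagonal_one]
  have hDmuD : Dm * diagonal μ * Dm = 1 := by
    rw [hDm, diagonal_mul_diagonal, diagonal_mul_diagonal]
    have : (fun k => (Real.sqrt (μ k))⁻¹ * μ k * (Real.sqrt (μ k))⁻¹) = fun _ => (1:ℝ) := by
      funext k
      have h := Real.mul_self_sqrt (hμ k).le
      rw [← h]
      field_simp
      rw [Real.sqrt_sq (Real.sqrt_nonneg _)]
      exact div_self (pow_ne_zero 2 (hsq k))
    rw [this, diagonal_one]
  have hOB' : OB * OBᵀ = 1 := mul_eq_one_comm.mp hOB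
  have hOA' : OA * OAᵀ = 1 := mul_eq_one_comm.mp hOA
  have hΨ' : Ψ * Ψᵀ = 1 := mul_eq_one_comm.mp hΨ
  have canOB : ∀ {n : ℕ} (M : Matrix (Fin d) (Fin n) ℝ), OBᵀ * (OB * M) = M := by
    intro n M; rw [← Matrix.mul_assoc, hOB, Matrix.one_mul]
  have canOB' : ∀ {n : ℕ} (M : Matrix (Fin d) (Fin n) ℝ), OB * (OBᵀ * M) = M := by
    intro n M; rw [← Matrix.mul_assoc, hOB', Matrix.one_mul]
  have canOA' : ∀ {n : ℕ} (M : Matrix (Fin d) (Fin n) ℝ), OA * (OAᵀ * M) = M := by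
    intro n M; rw [← Matrix.mul_assoc, hOA', Matrix.one_mul]
  have canΨ' : ∀ {n : ℕ} (M : Matrix (Fin r) (Fin n) ℝ), Ψ * (Ψᵀ * M) = M := by
    intro n M; rw [← Matrix.mul_assoc, hΨ', Matrix.one_mul]
  have canD : ∀ {n : ℕ} (M : Matrix (Fin d) (Fin n) ℝ), Dm * (diagonal μ * (Dm * M)) = M := by
    intro n M
    rw [← Matrix.mul_assoc, ← Matrix.mul_assoc, hDmuD, Matrix.one_mul]
  have sandwich : ∀ (S : Matrix (Fin d) (Fin d) ℝ) (M N : Matrix (Fin d) (Fin r) ℝ),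
      (OB*Dm*OA*M*Ψ)ᵀ * S * (OB*Dm*OA*N*Ψ)
        = Ψᵀ * (Mᵀ * ((OAᵀ*Dm*OBᵀ)*S*(OB*Dm*OA)) * N) * Ψ := by
    intro S M N
    rw [hDm]
    simp only [transpose_mul, diagonal_transpose, Matrix.mul_assoc]
  have hinner_A : (OAᵀ*Dm*OBᵀ)*A*(OB*Dm*OA) = diagonal lam := by
    have h1 : (OAᵀ*Dm*OBᵀ)*A*(OB*Dm*OA) = OAᵀ*(Dm*OBᵀ*A*(OB*Dm))*OA := by
      simp only [Matrix.mul_assoc]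
    rw [h1]
    have h2 : Dm*OBᵀ*A*(OB*Dm) = OA * diagonal lam * OAᵀ := by
      rw [← hAdec, hDm]; simp only [Matrix.mul_assoc]
    rw [h2]
    calc OAᵀ*(OA*diagonal lam*OAᵀ)*OA
        = OAᵀ*OA*diagonal lam*(OAᵀ*OA) := by simp only [Matrix.mul_assoc]
      _ = diagonal lam := by rw [hOA, Matrix.mul_one, Matrix.one_mul]
  have hinner_B : (OAᵀ*Dm*OBᵀ)*B*(OB*Dm*OA) = 1 := by
    rw [hBdec]
    have h1 : (OAᵀ*Dm*OBᵀ)*(OB*diagonal μ*OBᵀ)*(OB*Dm*OA)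
        = OAᵀ*(Dm*(OBᵀ*(OB*(diagonal μ*(OBᵀ*(OB*(Dm*OA))))))) := by
      simp only [Matrix.mul_assoc]
    rw [h1, canOB, canOB, canD, hOA]
  have hsubE : OA.submatrix id (Fin.castLE hrlt.le) = OA * E := by
    rw [hE]; ext i j; simp [Matrix.mul_apply, Matrix.one_apply]
  have hEE : Eᵀ * E = 1 := by
    rw [hE]; ext j k
    simp [Matrix.mul_apply, Matrix.one_apply, Fin.castLE_inj]
  have hXf : X = OB*Dm*OA*E*Ψ := by
    rw [hX, hsubE]; simp only [Matrix.mul_assoc]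
  have hVf : V = OB*Dm*OA*W*Ψ := by
    have h1 : OB*Dm*OA*W*Ψ = OB*(Dm*(OA*(OAᵀ*(Sm*(OBᵀ*(V*(Ψᵀ*Ψ))))))) := by
      rw [hW]; simp only [Matrix.mul_assoc]
    rw [h1, hΨ, Matrix.mul_one, canOA', ← Matrix.mul_assoc Dm Sm, hDmSm,
      Matrix.one_mul, canOB']
  -- the eight product computations
  have e1 : Vᵀ*A*V = Ψᵀ*(Wᵀ*(diagonal lam)*W)*Ψ := by
    rw [hVf, sandwich, hinner_A]
  have e2 : Xᵀ*A*X = Ψᵀ*(Eᵀ*(diagonal lam)*E)*Ψ := by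
    rw [hXf, sandwich, hinner_A]
  have e3 : Xᵀ*A*V = Ψᵀ*(Eᵀ*(diagonal lam)*W)*Ψ := by
    rw [hXf, hVf, sandwich, hinner_A]
  have e4 : Vᵀ*A*X = Ψᵀ*(Wᵀ*(diagonal lam)*E)*Ψ := by
    rw [hXf, hVf, sandwich, hinner_A]
  have e5 : Vᵀ*B*V = Ψᵀ*(Wᵀ*W)*Ψ := by
    rw [hVf, sandwich, hinner_B, Matrix.mul_one]
  have e6 : Xᵀ*B*X = 1 := by
    rw [hXf, sandwich, hinner_B, Matrix.mul_one, hEE, Matrix.mul_one, hΨ]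
  have e7 : Xᵀ*B*V = Ψᵀ*(Eᵀ*W)*Ψ := by
    rw [hXf, hVf, sandwich, hinner_B, Matrix.mul_one]
  have e8 : Vᵀ*B*X = Ψᵀ*(Wᵀ*E)*Ψ := by
    rw [hXf, hVf, sandwich, hinner_B, Matrix.mul_one]
  have hadd : ∀ M N : Matrix (Fin r) (Fin r) ℝ, Ψᵀ*M*Ψ + Ψᵀ*N*Ψ = Ψᵀ*(M+N)*Ψ := by
    intro M N
    simp only [Matrix.mul_add, Matrix.add_mul]
  have htr1 : ∀ M : Matrix (Fin r) (Fin r) ℝ, (Ψᵀ*M*Ψ).trace = M.trace := by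
    intro M
    rw [Matrix.trace_mul_cycle, hΨ', Matrix.one_mul]
  have htr2 : ∀ M N : Matrix (Fin r) (Fin r) ℝ,
      ((Ψᵀ*M*Ψ)*(Ψᵀ*N*Ψ)).trace = (M*N).trace := by
    intro M N
    have h1 : (Ψᵀ*M*Ψ)*(Ψᵀ*N*Ψ) = Ψᵀ*(M*N)*Ψ := by
      have : (Ψᵀ*M*Ψ)*(Ψᵀ*N*Ψ) = Ψᵀ*(M*(Ψ*(Ψᵀ*(N*Ψ)))) := by
        simp only [Matrix.mul_assoc]
      rw [this, canΨ']
      simp only [Matrix.mul_assoc]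
    rw [h1, htr1]
  rw [gevHessQuad_eq, e1, e2, e3, e4, e5, e6, e7, e8, Matrix.mul_one, hadd, hadd,
    htr2, htr2, htr1]
  have key := gev_key_nonneg d r hr hrlt lam hlam hgap hpos W
  rw [hE] at *
  linarith
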